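/- For all nonnegative integers k and m with m <= k, the following power series identity holds in Q[[x]]: (1-x)^{2k+1} * sum over n >= 0 of C(n+k, k) * C(n+k-m, k) * x^{n} = x^m * sum over j from m to k of C(k-m, j-m) * C(k+m, j) * x^{j-m}. Equivalently, sum_{n>=0} C(n+k,k) C(n+k-m,k) x^n = (sum_{j=m}^{k} C(k-m,j-m) C(k+m,j) x^{j-m}) / (1-x)^{2k+1}. -/

import Mathlib

open PowerSeries

private lemma vand (x y c : ℕ) :
    (x + y).choose c = ∑ i ∈ Finset.range (c + 1), x.choose i * y.choose (c - i) := by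
  rw [Nat.add_choose_eq, Finset.Nat.sum_antidiagonal_eq_sum_range_succ_mk]

private lemma Tr (k m r : ℕ) (hmk : m ≤ k) (hr : r ≤ k) :
    ∑ i ∈ Finset.range (k - m + 1),
      (k - m).choose i * ((k + m).choose (i + m) * (k - i).choose (k - r))
    = (k + r).choose k * (k + m).choose (k - r) := by
  have h1 : ∑ i ∈ Finset.range (k - m + 1),
      (k - m).choose i * ((k + m).choose (i + m) * (k - i).choose (k - r))
      = ∑ i ∈ Finset.range (r + 1),
      (k - m).choose i * ((k + m).choose (i + m) * (k - i).choose (k - r)) := by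
    rcases le_total r (k - m) with h | h
    · refine (Finset.sum_subset (Finset.range_subset_range.mpr (by omega)) ?_).symm
      intro i hi hni
      simp only [Finset.mem_range] at hi hni
      rw [Nat.choose_eq_zero_of_lt (show k - i < k - r by omega)]
      ring
    · refine Finset.sum_subset (Finset.range_subset_range.mpr (by omega)) ?_
      intro i hi hni
      simp only [Finset.mem_range] at hi hni
      rw [Nat.choose_eq_zero_of_lt (show k - m < i by omega)]
      ring
  rw [h1]
  have h2 : ∀ i ∈ Finset.range (r + 1),
      (k - m).choose i * ((k + m).choose (i + m) * (k - i).choose (k - r))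
      = (k + m).choose (k - r) * ((k - m).choose i * (m + r).choose (r - i)) := by
    intro i hi
    simp only [Finset.mem_range] at hi
    have hik : i ≤ k := by omega
    have e1 : (k + m).choose (i + m) = (k + m).choose (k - i) := by
      rw [← Nat.choose_symm (show i + m ≤ k + m by omega)]
      congr 1
      omega
    have e4 := Nat.choose_mul (n := k + m) (k := k - i) (s := k - r)
      (by omega)
    rw [show k + m - (k - r) = m + r by omega, show k - i - (k - r) = r - i by omega] at e4
    rw [e1, e4]
    ring
  rw [Finset.sum_congr rfl h2, ← Finset.mul_sum, ← vand (k - m) (m + r) r,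
    show k - m + (m + r) = k + r by omega]
  rw [show (k + r).choose r = (k + r).choose k by
    rw [← Nat.choose_symm (show k ≤ k + r by omega)]; congr 1; omega]
  ring

private lemma Dlem (a k i : ℕ) (hik : i ≤ k) :
    ∑ r ∈ Finset.range (k + 1), (a + k).choose (k + r) * (k - i).choose (k - r)
    = (a + k + (k - i)).choose (2 * k) := by
  have h0 : ∑ s ∈ Finset.range k, (a + k).choose s * (k - i).choose (2 * k - s) = 0 := by
    refine Finset.sum_eq_zero fun s hs => ?_
    simp only [Finset.mem_range] at hs
    rw [Nat.choose_eq_zero_of_lt (show k - i < 2 * k - s by omega)]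
    ring
  have split := Finset.sum_range_add
    (fun s => (a + k).choose s * (k - i).choose (2 * k - s)) k (k + 1)
  rw [show k + (k + 1) = 2 * k + 1 by omega, h0, zero_add] at split
  rw [vand (a + k) (k - i) (2 * k), split]
  refine Finset.sum_congr rfl fun r hr => ?_
  rw [show 2 * k - (k + r) = k - r by omega]

private lemma LHSexp (a k m : ℕ) :
    (a + m + k).choose k * (a + k).choose k
    = ∑ r ∈ Finset.range (k + 1),
        (a + k).choose (k + r) * ((k + r).choose k * (k + m).choose (k - r)) := by
  rw [show a + m + k = a + (k + m) by omega, vand a (k + m) k, Finset.sum_mul]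
  refine Finset.sum_congr rfl fun r hr => ?_
  rcases le_or_gt r a with h | h
  · have e := Nat.choose_mul (n := a + k) (k := k + r) (s := k) (by omega)
    rw [show a + k - k = a by omega, show k + r - k = r by omega] at e
    rw [← mul_assoc, e]
    ring
  · rw [Nat.choose_eq_zero_of_lt (show a < r by omega),
      Nat.choose_eq_zero_of_lt (show a + k < k + r by omega)]
    ring

private lemma core (a k m : ℕ) (hmk : m ≤ k) :
    (a + m + k).choose k * (a + k).choose k
    = ∑ i ∈ Finset.range (k - m + 1),
        (k - m).choose i * ((k + m).choose (i + m) * (a + k + (k - i)).choose (2 * k)) := by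
  rw [LHSexp a k m]
  have step1 : ∀ r ∈ Finset.range (k + 1),
      (a + k).choose (k + r) * ((k + r).choose k * (k + m).choose (k - r))
      = ∑ i ∈ Finset.range (k - m + 1),
          (a + k).choose (k + r) *
            ((k - m).choose i * ((k + m).choose (i + m) * (k - i).choose (k - r))) := by
    intro r hr
    simp only [Finset.mem_range] at hr
    rw [← Finset.mul_sum, Tr k m r hmk (by omega)]
  rw [Finset.sum_congr rfl step1, Finset.sum_comm]
  refine Finset.sum_congr rfl fun i hi => ?_
  simp only [Finset.mem_range] at hi
  rw [← Dlem a k i (by omega), Finset.mul_sum, Finset.mul_sum]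
  refine Finset.sum_congr rfl fun r hr => ?_
  ring

private lemma coeff_core (k m n : ℕ) (hmk : m ≤ k) :
    ((n + k).choose k : ℚ) * ((n + k - m).choose k : ℚ)
    = ∑ j ∈ Finset.Icc m k,
        ((k - m).choose (j - m) : ℚ) * ((k + m).choose j : ℚ) *
          (if j ≤ n then ((2 * k + (n - j)).choose (2 * k) : ℚ) else 0) := by
  rcases lt_or_ge n m with hnm | hnm
  · rw [Nat.choose_eq_zero_of_lt (show n + k - m < k by omega)]
    rw [Finset.sum_eq_zero]
    · simp
    · intro j hj
      simp only [Finset.mem_Icc] at hj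
      rw [if_neg (by omega)]
      ring
  · obtain ⟨a, rfl⟩ : ∃ a, n = m + a := ⟨n - m, by omega⟩
    rw [show m + a + k - m = a + k by omega, show m + a + k = a + m + k by omega]
    rw [← Finset.Ico_add_one_right_eq_Icc, Finset.sum_Ico_eq_sum_range,
      show k + 1 - m = k - m + 1 by omega]
    have hterm : ∀ i ∈ Finset.range (k - m + 1),
        ((k - m).choose (m + i - m) : ℚ) * ((k + m).choose (m + i) : ℚ) *
          (if m + i ≤ m + a then ((2 * k + (m + a - (m + i))).choose (2 * k) : ℚ) else 0)
        = ((k - m).choose i : ℚ) *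
            (((k + m).choose (i + m) : ℚ) * ((a + k + (k - i)).choose (2 * k) : ℚ)) := by
      intro i hi
      simp only [Finset.mem_range] at hi
      rw [show m + i - m = i by omega, show m + i = i + m by omega]
      rcases le_or_gt i a with h | h
      · rw [if_pos (by omega), show m + a - (i + m) = a - i by omega,
          show 2 * k + (a - i) = a + k + (k - i) by omega]
        ring
      · rw [if_neg (by omega),
          Nat.choose_eq_zero_of_lt (show a + k + (k - i) < 2 * k by omega)]
        push_cast
        ring
    rw [Finset.sum_congr rfl hterm]
    exact_mod_cast core a k m hmk

/-- For `m ≤ k`, as formal power series in `ℚ[[X]]`: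
`(1-X)^{2k+1} ∑_{n≥0} C(n+k,k) C(n+k-m,k) X^n
  = X^m ∑_{j=m}^{k} C(k-m, j-m) C(k+m, j) X^{j-m}`. -/
theorem powerSeries_choose_identity (k m : ℕ) (hmk : m ≤ k) :
    (1 - X : PowerSeries ℚ) ^ (2 * k + 1) *
        PowerSeries.mk (fun n => ((n + k).choose k : ℚ) * ((n + k - m).choose k : ℚ)) =
      (X : PowerSeries ℚ) ^ m *
        ∑ j ∈ Finset.Icc m k,
          (PowerSeries.C (R := ℚ)) (((k - m).choose (j - m) : ℚ) * ((k + m).choose j : ℚ)) *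
            X ^ (j - m) := by
  have hX : (X : PowerSeries ℚ) ^ m *
      ∑ j ∈ Finset.Icc m k,
        PowerSeries.C (R := ℚ) (((k - m).choose (j - m) : ℚ) * ((k + m).choose j : ℚ)) *
          X ^ (j - m)
      = ∑ j ∈ Finset.Icc m k,
        PowerSeries.C (R := ℚ) (((k - m).choose (j - m) : ℚ) * ((k + m).choose j : ℚ)) * X ^ j := by
    rw [Finset.mul_sum]
    refine Finset.sum_congr rfl fun j hj => ?_
    simp only [Finset.mem_Icc] at hj
    rw [mul_left_comm, ← pow_add, show m + (j - m) = j by omega]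
  rw [hX]
  have key : PowerSeries.mk (fun n => ((n + k).choose k : ℚ) * ((n + k - m).choose k : ℚ))
      = (∑ j ∈ Finset.Icc m k,
          PowerSeries.C (R := ℚ) (((k - m).choose (j - m) : ℚ) * ((k + m).choose j : ℚ)) * X ^ j) *
        (invOneSubPow ℚ (2 * k + 1)).val := by
    ext n
    rw [coeff_mk, Finset.sum_mul, map_sum]
    have hco : ∀ j, (coeff n)
        (PowerSeries.C (R := ℚ) (((k - m).choose (j - m) : ℚ) * ((k + m).choose j : ℚ)) * X ^ j *
          (invOneSubPow ℚ (2 * k + 1)).val)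
        = ((k - m).choose (j - m) : ℚ) * ((k + m).choose j : ℚ) *
            (if j ≤ n then ((2 * k + (n - j)).choose (2 * k) : ℚ) else 0) := by
      intro j
      rw [mul_assoc, mul_comm ((X : PowerSeries ℚ) ^ j), ← mul_assoc,
        mul_assoc (PowerSeries.C (R := ℚ) _)]
      rw [coeff_C_mul, coeff_mul_X_pow']
      congr 1
      split
      · rw [invOneSubPow_val_eq_mk_sub_one_add_choose_of_pos ℚ (d := 2 * k + 1) (by omega),
          coeff_mk, show 2 * k + 1 - 1 = 2 * k by omega]
      · rfl
    rw [Finset.sum_congr rfl fun j _ => hco j]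
    exact coeff_core k m n hmk
  rw [key, mul_comm (∑ j ∈ Finset.Icc m k, _) ((invOneSubPow ℚ (2 * k + 1)).val), ← mul_assoc,
    ← invOneSubPow_inv_eq_one_sub_pow, (invOneSubPow ℚ (2 * k + 1)).inv_val, one_mul]
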